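/- Let ρ be a density matrix on ℂ^d (a positive semidefinite d×d complex matrix with trace 1), let ψ ∈ ℂ^d be a unit vector, and let (E_x)_{x ∈ S} be a finite POVM on ℂ^d (a finite family of positive semidefinite matrices summing to the identity). Set δ_f = 1 − Re⟨ψ, ρψ⟩ and δ_p = 1 − Tr(ρ²). Then (1/2)·Σ_{x∈S} |Tr(E_x · ρ) − ⟨ψ, E_x ψ⟩| ≤ δ_f + √(δ_f − δ_f²/2 − δ_p/2). -/

import Mathlib

open Matrix ComplexOrder

namespace Stmt11Aux

variable {d : ℕ}

lemma trace_mul_vecMulVec (A : Matrix (Fin d) (Fin d) ℂ) (u w : Fin d → ℂ) :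
    (A * vecMulVec u w).trace = w ⬝ᵥ A.mulVec u := by
  simp only [Matrix.trace, Matrix.diag_apply, Matrix.mul_apply, vecMulVec_apply,
    dotProduct, Matrix.mulVec, Finset.mul_sum]
  exact Finset.sum_congr rfl fun i _ => Finset.sum_congr rfl fun j _ => by ring

lemma trace_vecMulVec (u w : Fin d → ℂ) :
    (vecMulVec u w).trace = u ⬝ᵥ w := by
  simp [Matrix.trace, vecMulVec_apply, dotProduct]

lemma mul_vecMulVec (A : Matrix (Fin d) (Fin d) ℂ) (u w : Fin d → ℂ) :
    A * vecMulVec u w = vecMulVec (A *ᵥ u) w := by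
  ext i j
  simp only [Matrix.mul_apply, vecMulVec_apply, Matrix.mulVec, dotProduct, Finset.sum_mul]
  exact Finset.sum_congr rfl fun k _ => by ring

lemma vecMulVec_mul (u w : Fin d → ℂ) (A : Matrix (Fin d) (Fin d) ℂ) :
    vecMulVec u w * A = vecMulVec u (w ᵥ* A) := by
  ext i j
  simp only [Matrix.mul_apply, vecMulVec_apply, Matrix.vecMul, dotProduct, Finset.mul_sum]
  exact Finset.sum_congr rfl fun k _ => by ring

lemma vecMul_vecMulVec (v u w : Fin d → ℂ) :
    v ᵥ* vecMulVec u w = (v ⬝ᵥ u) • w := by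
  ext j
  simp only [Matrix.vecMul, vecMulVec_apply, dotProduct, Pi.smul_apply, smul_eq_mul,
    Finset.sum_mul]
  exact Finset.sum_congr rfl fun k _ => by ring

lemma trace_mul_nonneg {A B : Matrix (Fin d) (Fin d) ℂ}
    (hA : A.PosSemidef) (hB : B.PosSemidef) : 0 ≤ (A * B).trace := by
  classical
  obtain ⟨L, hLsa, -, hL⟩ := open scoped MatrixOrder in
    CFC.exists_sqrt_of_isSelfAdjoint_of_quasispectrumRestricts hB.isHermitian
      (QuasispectrumRestricts.nnreal_of_nonneg hB.nonneg)
  have hLh : L.IsHermitian := hLsa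
  have h1 : (A * B).trace = (L * A * L).trace := by
    rw [← hL, ← Matrix.mul_assoc, trace_mul_cycle]
  rw [h1]
  have h2 : ∀ i, (L * A * L) i i = star (fun k => L k i) ⬝ᵥ A *ᵥ (fun k => L k i) := by
    intro i
    simp only [Matrix.mul_apply, dotProduct, Matrix.mulVec, Pi.star_apply, Finset.mul_sum,
      Finset.sum_mul]
    rw [Finset.sum_comm]
    refine Finset.sum_congr rfl fun k _ => Finset.sum_congr rfl fun j _ => ?_
    rw [← hLh.apply i k]
    ring
  have h3 : ∀ i, (0:ℂ) ≤ (L * A * L) i i := fun i => (h2 i) ▸ hA.dotProduct_mulVec_nonneg _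
  exact Finset.sum_nonneg fun i _ => h3 i

lemma cabs_of_nonneg {z : ℂ} (h : 0 ≤ z) : ‖z‖ = z.re := by
  obtain ⟨h1, h2⟩ := Complex.le_def.mp h
  simp only [Complex.zero_re, Complex.zero_im] at h1 h2
  have hz : z = (z.re : ℂ) := by apply Complex.ext <;> simp [← h2]
  rw [hz]
  simp only [Complex.norm_real, Real.norm_eq_abs, Complex.ofReal_re]
  exact abs_of_nonneg h1

lemma ofReal_re_of_nonneg {z : ℂ} (h : 0 ≤ z) : ((z.re : ℝ) : ℂ) = z := by
  obtain ⟨_, h2⟩ := Complex.le_def.mp h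
  simp only [Complex.zero_im] at h2
  have hz : z = ((z.re:ℝ):ℂ) := by apply Complex.ext <;> simp [← h2]
  exact hz.symm

lemma re_nonneg_of_nonneg {z : ℂ} (h : 0 ≤ z) : 0 ≤ z.re := by
  simpa using (Complex.le_def.mp h).1

end Stmt11Aux


set_option maxHeartbeats 1000000 in
/-- For a density matrix `ρ`, a unit vector `ψ`, and a finite POVM
`(E_x)`, with infidelity `δ_f = 1 − Re⟨ψ, ρψ⟩` and impurity `δ_p = 1 − Tr(ρ²)`, the
total variation distance between the outcome distributions on `ρ` and on `|ψ⟩⟨ψ|` is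
at most `δ_f + √(δ_f − δ_f²/2 − δ_p/2)`. -/
theorem stmt_11 {d : ℕ} {S : Type*} [Fintype S]
    (ρ : Matrix (Fin d) (Fin d) ℂ) (hρ : ρ.PosSemidef) (hρtr : ρ.trace = 1)
    (ψ : Fin d → ℂ) (hψ : ∑ i, (starRingEnd ℂ) (ψ i) * ψ i = 1)
    (E : S → Matrix (Fin d) (Fin d) ℂ)
    (hE : ∀ x, (E x).PosSemidef) (hEsum : ∑ x, E x = 1)
    (δf δp : ℝ)
    (hδf : δf = 1 - (∑ i, (starRingEnd ℂ) (ψ i) * ρ.mulVec ψ i).re)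
    (hδp : δp = 1 - ((ρ * ρ).trace).re) :
    (1 / 2) * ∑ x, ‖(E x * ρ).trace
        - ∑ i, (starRingEnd ℂ) (ψ i) * (E x).mulVec ψ i‖
      ≤ δf + Real.sqrt (δf - δf ^ 2 / 2 - δp / 2) := by
  classical
  open Stmt11Aux in
  have hherm : ρᴴ = ρ := hρ.1
  have hψ1 : star ψ ⬝ᵥ ψ = 1 := hψ
  set z := star ψ ⬝ᵥ ρ *ᵥ ψ with hzdef
  have hz0 : 0 ≤ z := hρ.dotProduct_mulVec_nonneg ψ
  set c : ℝ := 1 - δf with hcdef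
  have hsumz : (∑ i, (starRingEnd ℂ) (ψ i) * ρ.mulVec ψ i) = z := rfl
  have hzc : z = (c : ℂ) := by
    have him : z.im = 0 := by
      have h2 := (Complex.le_def.mp hz0).2
      simpa using h2.symm
    have hre : z.re = c := by
      rw [hcdef, hδf, hsumz]; ring
    apply Complex.ext <;> simp [hre, him]
  set b : Fin d → ℂ := ρ *ᵥ ψ - (c : ℂ) • ψ with hbdef
  have hρψ : ρ *ᵥ ψ = b + (c : ℂ) • ψ := by rw [hbdef, sub_add_cancel]
  have hψb : star ψ ⬝ᵥ b = 0 := by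
    rw [hbdef, dotProduct_sub, dotProduct_smul, hψ1, ← hzdef, hzc]
    simp
  have hbψ : star b ⬝ᵥ ψ = 0 := by
    rw [star_dotProduct, hψb, star_zero]
  have hb0 : (0:ℂ) ≤ star b ⬝ᵥ b := dotProduct_star_self_nonneg b
  set nb2 : ℝ := (star b ⬝ᵥ b).re with hnb2def
  have hb2 : star b ⬝ᵥ b = ((nb2 : ℝ) : ℂ) := (ofReal_re_of_nonneg hb0).symm
  have hnb2 : 0 ≤ nb2 := re_nonneg_of_nonneg hb0
  clear_value b
  set P := vecMulVec ψ (star ψ) with hPdef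
  have hPh : P.IsHermitian := by
    ext i j
    simp [hPdef, conjTranspose_apply, vecMulVec_apply, mul_comm]
  set N := (1 : Matrix (Fin d) (Fin d) ℂ) - P with hNdef
  have hNh : Nᴴ = N := Matrix.isHermitian_one.sub hPh
  set R := N * ρ * N with hRdef
  have hRpsd : R.PosSemidef := by
    have h := hρ.mul_mul_conjTranspose_same N
    rwa [hNh] at h
  have hrow : star ψ ᵥ* ρ = star b + (c : ℂ) • star ψ := by
    have h1 : star (ρ *ᵥ ψ) = star ψ ᵥ* ρ := by rw [star_mulVec, hherm]
    rw [← h1, hρψ]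
    funext k
    simp [Pi.star_apply, Complex.star_def, Complex.conj_ofReal]
  have hPρ : P * ρ = vecMulVec ψ (star b) + (c : ℂ) • P := by
    rw [hPdef, Stmt11Aux.vecMulVec_mul, hrow]
    ext i j
    simp [vecMulVec_apply]
    ring
  have hρP : ρ * P = vecMulVec b (star ψ) + (c : ℂ) • P := by
    rw [hPdef, Stmt11Aux.mul_vecMulVec, hρψ]
    ext i j
    simp [vecMulVec_apply]
    ring
  have hPP : P * P = P := by
    rw [hPdef, Stmt11Aux.vecMulVec_mul, Stmt11Aux.vecMul_vecMulVec, hψ1, one_smul]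
  have hPρP : P * ρ * P = (c : ℂ) • P := by
    have hz1 : vecMulVec ψ (star b) * P = 0 := by
      rw [hPdef, Stmt11Aux.vecMulVec_mul, Stmt11Aux.vecMul_vecMulVec, hbψ, zero_smul]
      ext i j; simp [vecMulVec_apply]
    rw [hPρ, add_mul, smul_mul_assoc, hPP, hz1, zero_add]
  have hR2 : R = ρ - vecMulVec ψ (star b) - vecMulVec b (star ψ) - (c : ℂ) • P := by
    have e3 : R = ρ - P * ρ - (ρ * P - P * ρ * P) := by
      rw [hRdef, hNdef]; noncomm_ring
    rw [e3, hPρP, hρP, hPρ]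
    abel
  have hρdecomp : ρ = R + vecMulVec ψ (star b) + vecMulVec b (star ψ) + (c : ℂ) • P := by
    rw [hR2]; abel
  have htrP : P.trace = 1 := by
    rw [hPdef, Stmt11Aux.trace_vecMulVec, dotProduct_comm, hψ1]
  have htrψb : (vecMulVec ψ (star b)).trace = 0 := by
    rw [Stmt11Aux.trace_vecMulVec, dotProduct_comm, hbψ]
  have htrbψ : (vecMulVec b (star ψ)).trace = 0 := by
    rw [Stmt11Aux.trace_vecMulVec, dotProduct_comm, hψb]
  have htrR : R.trace = ((δf : ℝ) : ℂ) := by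
    rw [hR2, trace_sub, trace_sub, trace_sub, trace_smul, hρtr, htrψb, htrbψ, htrP,
      smul_eq_mul, mul_one, hcdef]
    push_cast
    ring
  have hδf0 : 0 ≤ δf := by
    have h := trace_mul_nonneg hRpsd (Matrix.PosSemidef.one)
    rw [mul_one, htrR] at h
    have := re_nonneg_of_nonneg h
    simpa using this
  have hEtr : ∀ A : Matrix (Fin d) (Fin d) ℂ, ∑ x, (E x * A).trace = A.trace := by
    intro A
    rw [← Matrix.trace_sum, ← Finset.sum_mul, hEsum, one_mul]
  -- purity
  have htrPρ2 : (vecMulVec ψ (star b) * ρ).trace = ((nb2 : ℝ) : ℂ) := by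
    rw [trace_mul_comm, trace_mul_vecMulVec, hρψ, dotProduct_add, dotProduct_smul, hb2, hbψ]
    simp
  have htrbρ : (vecMulVec b (star ψ) * ρ).trace = ((nb2 : ℝ) : ℂ) := by
    rw [trace_mul_comm, trace_mul_vecMulVec, dotProduct_mulVec, hrow, add_dotProduct,
      smul_dotProduct, hψb, hb2]
    simp
  have htrPρ : (P * ρ).trace = (c : ℂ) := by
    rw [trace_mul_comm, hPdef, trace_mul_vecMulVec, ← hzdef, hzc]
  have hpurity : (ρ * ρ).trace = (R * ρ).trace + ((2 * nb2 + c ^ 2 : ℝ) : ℂ) := by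
    conv_lhs => rw [show ρ * ρ = (R + vecMulVec ψ (star b) + vecMulVec b (star ψ)
      + (c : ℂ) • P) * ρ by rw [← hρdecomp]]
    rw [add_mul, add_mul, add_mul, trace_add, trace_add, trace_add, htrPρ2, htrbρ,
      smul_mul_assoc, trace_smul, htrPρ, smul_eq_mul]
    push_cast
    ring
  have hnb2le : nb2 ≤ δf - δf ^ 2 / 2 - δp / 2 := by
    have h1 : 0 ≤ ((R * ρ).trace).re := re_nonneg_of_nonneg (trace_mul_nonneg hRpsd hρ)
    have h2 : ((ρ * ρ).trace).re = ((R * ρ).trace).re + (2 * nb2 + c ^ 2) := by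
      rw [hpurity, Complex.add_re, Complex.ofReal_re]
    rw [hcdef] at h2
    rw [hδp]
    nlinarith [h1, h2]
  -- per-x decomposition
  have hsx : ∀ x, ((E x * ρ).trace - ∑ i, (starRingEnd ℂ) (ψ i) * (E x).mulVec ψ i)
      = (E x * R).trace + ((E x * vecMulVec ψ (star b)).trace
        + (E x * vecMulVec b (star ψ)).trace) - ((δf : ℝ) : ℂ) * (E x * P).trace := by
    intro x
    have h1 : (∑ i, (starRingEnd ℂ) (ψ i) * (E x).mulVec ψ i) = (E x * P).trace := by
      rw [hPdef, trace_mul_vecMulVec]; rfl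
    have h2 : E x * ρ = E x * R + E x * vecMulVec ψ (star b) + E x * vecMulVec b (star ψ)
        + (c : ℂ) • (E x * P) := by
      rw [← Matrix.mul_smul, ← mul_add, ← mul_add, ← mul_add, ← hρdecomp]
    rw [h1, h2, trace_add, trace_add, trace_add, trace_smul, smul_eq_mul, hcdef]
    push_cast
    ring
  -- nonnegativity of per-x quantities
  have hax : ∀ x, (0:ℂ) ≤ (E x * R).trace := fun x => trace_mul_nonneg (hE x) hRpsd
  have hpx : ∀ x, (0:ℂ) ≤ (E x * P).trace := by
    intro x
    rw [hPdef, trace_mul_vecMulVec]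
    exact (hE x).dotProduct_mulVec_nonneg ψ
  have hsumare : ∑ x, ((E x * R).trace).re = δf := by
    rw [← Complex.re_sum, hEtr R, htrR, Complex.ofReal_re]
  have hsumpre : ∑ x, ((E x * P).trace).re = 1 := by
    rw [← Complex.re_sum, hEtr P, htrP, Complex.one_re]
  have hsqrt0 : 0 ≤ Real.sqrt (δf - δf ^ 2 / 2 - δp / 2) := Real.sqrt_nonneg _
  by_cases hbz : nb2 = 0
  · -- b = 0 case
    have hb : b = 0 := by
      have : star b ⬝ᵥ b = 0 := by rw [hb2, hbz]; simp
      exact dotProduct_star_self_eq_zero.mp this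
    have hv1 : vecMulVec ψ (star b) = 0 := by
      ext i j; simp [vecMulVec_apply, hb]
    have hv2 : vecMulVec b (star ψ) = 0 := by
      ext i j; simp [vecMulVec_apply, hb]
    have key : ∀ x, ‖(E x * ρ).trace
        - ∑ i, (starRingEnd ℂ) (ψ i) * (E x).mulVec ψ i‖
        ≤ ((E x * R).trace).re + δf * ((E x * P).trace).re := by
      intro x
      have hgx : ((E x * ρ).trace - ∑ i, (starRingEnd ℂ) (ψ i) * (E x).mulVec ψ i)
          = ((((E x * R).trace).re - δf * ((E x * P).trace).re : ℝ) : ℂ) := by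
        have e := hsx x
        rw [hv1, hv2] at e
        simp only [Matrix.mul_zero, trace_zero, add_zero] at e
        rw [e]
        conv_lhs => rw [← ofReal_re_of_nonneg (hax x), ← ofReal_re_of_nonneg (hpx x)]
        push_cast
        ring
      rw [hgx, Complex.norm_real, Real.norm_eq_abs]
      have h1 : 0 ≤ ((E x * R).trace).re := re_nonneg_of_nonneg (hax x)
      have h2 : 0 ≤ ((E x * P).trace).re := re_nonneg_of_nonneg (hpx x)
      have h3 : 0 ≤ δf * ((E x * P).trace).re := mul_nonneg hδf0 h2
      rw [abs_le]
      constructor <;> nlinarith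
    have hsum : ∑ x, ‖(E x * ρ).trace
        - ∑ i, (starRingEnd ℂ) (ψ i) * (E x).mulVec ψ i‖ ≤ 2 * δf := by
      calc ∑ x, ‖(E x * ρ).trace - ∑ i, (starRingEnd ℂ) (ψ i) * (E x).mulVec ψ i‖
          ≤ ∑ x, (((E x * R).trace).re + δf * ((E x * P).trace).re) :=
            Finset.sum_le_sum fun x _ => key x
        _ = (∑ x, ((E x * R).trace).re) + δf * ∑ x, ((E x * P).trace).re := by
            rw [Finset.sum_add_distrib, Finset.mul_sum]
        _ = 2 * δf := by rw [hsumare, hsumpre]; ring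
    linarith
  · -- b ≠ 0 case
    have hnb2pos : 0 < nb2 := lt_of_le_of_ne hnb2 (Ne.symm hbz)
    set nb : ℝ := Real.sqrt nb2 with hnbdef
    have hnbpos : 0 < nb := Real.sqrt_pos.mpr hnb2pos
    have hnbsq : nb ^ 2 = nb2 := Real.sq_sqrt hnb2
    set v : Fin d → ℂ := (nb : ℂ) • ψ + b with hvdef
    set w : Fin d → ℂ := (nb : ℂ) • ψ - b with hwdef
    have hMv : vecMulVec ψ (star b) + vecMulVec b (star ψ)
        = ((1 / (2 * nb) : ℝ) : ℂ) • (vecMulVec v (star v) - vecMulVec w (star w)) := by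
      have hnb0 : (nb : ℂ) ≠ 0 := by
        simp only [ne_eq, Complex.ofReal_eq_zero]
        exact ne_of_gt hnbpos
      ext i j
      simp only [Matrix.add_apply, Matrix.sub_apply, Matrix.smul_apply, vecMulVec_apply,
        hvdef, hwdef, Pi.star_apply, Pi.add_apply, Pi.sub_apply, Pi.smul_apply,
        smul_eq_mul, star_add, star_sub, star_mul', Complex.star_def,
        Complex.conj_ofReal, _root_.map_mul]
      push_cast
      field_simp
      ring
    have hvv : star v ⬝ᵥ v = ((2 * nb2 : ℝ) : ℂ) := by
      have hsv : star v = (nb : ℂ) • star ψ + star b := by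
        funext k
        simp [hvdef, Pi.star_apply, Complex.star_def, Complex.conj_ofReal]
      rw [hsv, hvdef]
      simp only [add_dotProduct, dotProduct_add, smul_dotProduct, dotProduct_smul,
        smul_eq_mul]
      rw [hψ1, hψb, hbψ, hb2]
      push_cast [← hnbsq]
      ring
    have hww : star w ⬝ᵥ w = ((2 * nb2 : ℝ) : ℂ) := by
      have hsw : star w = (nb : ℂ) • star ψ - star b := by
        funext k
        simp [hwdef, Pi.star_apply, Complex.star_def, Complex.conj_ofReal]
      rw [hsw, hwdef]
      simp only [sub_dotProduct, dotProduct_sub, smul_dotProduct, dotProduct_smul,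
        smul_eq_mul]
      rw [hψ1, hψb, hbψ, hb2]
      push_cast [← hnbsq]
      ring
    have hsxx : ∀ x, (0:ℂ) ≤ (E x * vecMulVec v (star v)).trace := by
      intro x
      rw [trace_mul_vecMulVec]
      exact (hE x).dotProduct_mulVec_nonneg v
    have htxx : ∀ x, (0:ℂ) ≤ (E x * vecMulVec w (star w)).trace := by
      intro x
      rw [trace_mul_vecMulVec]
      exact (hE x).dotProduct_mulVec_nonneg w
    have hsums : ∑ x, ((E x * vecMulVec v (star v)).trace).re = 2 * nb2 := by
      rw [← Complex.re_sum, hEtr, Stmt11Aux.trace_vecMulVec, dotProduct_comm, hvv, Complex.ofReal_re]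
    have hsumt : ∑ x, ((E x * vecMulVec w (star w)).trace).re = 2 * nb2 := by
      rw [← Complex.re_sum, hEtr, Stmt11Aux.trace_vecMulVec, dotProduct_comm, hww, Complex.ofReal_re]
    have key : ∀ x, ‖(E x * ρ).trace
        - ∑ i, (starRingEnd ℂ) (ψ i) * (E x).mulVec ψ i‖
        ≤ ((E x * R).trace).re + δf * ((E x * P).trace).re
          + (1 / (2 * nb)) * (((E x * vecMulVec v (star v)).trace).re
            + ((E x * vecMulVec w (star w)).trace).re) := by
      intro x
      have hsplit : (E x * vecMulVec ψ (star b)).trace + (E x * vecMulVec b (star ψ)).trace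
          = ((1 / (2 * nb) : ℝ) : ℂ) * ((E x * vecMulVec v (star v)).trace
            - (E x * vecMulVec w (star w)).trace) := by
        rw [← trace_add, ← mul_add, hMv, Matrix.mul_smul, trace_smul, smul_eq_mul,
          mul_sub, trace_sub]
      have hgx : ((E x * ρ).trace - ∑ i, (starRingEnd ℂ) (ψ i) * (E x).mulVec ψ i)
          = ((( ((E x * R).trace).re - δf * ((E x * P).trace).re
            + (1 / (2 * nb)) * (((E x * vecMulVec v (star v)).trace).re
              - ((E x * vecMulVec w (star w)).trace).re) : ℝ)) : ℂ) := by
        have e := hsx x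
        rw [hsplit] at e
        rw [e]
        conv_lhs => rw [← ofReal_re_of_nonneg (hax x), ← ofReal_re_of_nonneg (hpx x),
          ← ofReal_re_of_nonneg (hsxx x), ← ofReal_re_of_nonneg (htxx x)]
        push_cast
        ring
      rw [hgx, Complex.norm_real, Real.norm_eq_abs]
      have h1 : 0 ≤ ((E x * R).trace).re := re_nonneg_of_nonneg (hax x)
      have h2 : 0 ≤ ((E x * P).trace).re := re_nonneg_of_nonneg (hpx x)
      have h3 : 0 ≤ ((E x * vecMulVec v (star v)).trace).re := re_nonneg_of_nonneg (hsxx x)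
      have h4 : 0 ≤ ((E x * vecMulVec w (star w)).trace).re := re_nonneg_of_nonneg (htxx x)
      have hr : 0 ≤ 1 / (2 * nb) := by positivity
      have h5 : 0 ≤ δf * ((E x * P).trace).re := mul_nonneg hδf0 h2
      have h6 : 0 ≤ (1 / (2 * nb)) * ((E x * vecMulVec v (star v)).trace).re :=
        mul_nonneg hr h3
      have h7 : 0 ≤ (1 / (2 * nb)) * ((E x * vecMulVec w (star w)).trace).re :=
        mul_nonneg hr h4
      rw [abs_le]
      constructor <;> nlinarith
    have hsum : ∑ x, ‖(E x * ρ).trace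
        - ∑ i, (starRingEnd ℂ) (ψ i) * (E x).mulVec ψ i‖ ≤ 2 * δf + 2 * nb := by
      calc ∑ x, ‖(E x * ρ).trace - ∑ i, (starRingEnd ℂ) (ψ i) * (E x).mulVec ψ i‖
          ≤ ∑ x, (((E x * R).trace).re + δf * ((E x * P).trace).re
            + (1 / (2 * nb)) * (((E x * vecMulVec v (star v)).trace).re
              + ((E x * vecMulVec w (star w)).trace).re)) :=
            Finset.sum_le_sum fun x _ => key x
        _ = (∑ x, ((E x * R).trace).re) + δf * (∑ x, ((E x * P).trace).re)
            + (1 / (2 * nb)) * ((∑ x, ((E x * vecMulVec v (star v)).trace).re)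
              + (∑ x, ((E x * vecMulVec w (star w)).trace).re)) := by
            simp only [Finset.sum_add_distrib, Finset.mul_sum, mul_add]
        _ = δf + δf * 1 + (1 / (2 * nb)) * (2 * nb2 + 2 * nb2) := by
            rw [hsumare, hsumpre, hsums, hsumt]
        _ = 2 * δf + 2 * nb := by
            have hnbne : nb ≠ 0 := ne_of_gt hnbpos
            field_simp
            nlinarith [hnbsq]
    have hnble : nb ≤ Real.sqrt (δf - δf ^ 2 / 2 - δp / 2) := by
      rw [hnbdef]
      exact Real.sqrt_le_sqrt hnb2le
    linarith
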